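/- As α → 0⁺, f(α) = 1/4 - ln(-ln α)/(8 ln α) + o(ln(-ln α)/ln α), where f(α) = ((1-2α)/2) ln((1-α)/α) / (Φ⁻¹(α))². -/

import Mathlib

open Real Set Filter Topology
open MeasureTheory

noncomputable def phi (y : ℝ) : ℝ := (Real.sqrt (2 * Real.pi))⁻¹ * Real.exp (-y ^ 2 / 2)

noncomputable def Phi (x : ℝ) : ℝ := ∫ y in Set.Iic x, phi y

noncomputable def PhiInv (a : ℝ) : ℝ := Function.invFun Phi a

lemma phi_pos (y : ℝ) : 0 < phi y := by
  have h : 0 < Real.sqrt (2 * Real.pi) := Real.sqrt_pos.2 (by positivity)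
  exact mul_pos (inv_pos.2 h) (Real.exp_pos _)

lemma phi_eq : phi = fun y : ℝ => (Real.sqrt (2 * Real.pi))⁻¹ * Real.exp (-(1/2) * y ^ 2) := by
  funext y; unfold phi; congr 1; ring_nf

lemma integrable_phi : Integrable phi := by
  rw [phi_eq]
  exact (integrable_exp_neg_mul_sq (by norm_num)).const_mul _

lemma continuous_phi : Continuous phi := by
  unfold phi; fun_prop

lemma integrable_mul_phi : Integrable (fun y => -y * phi y) := by
  rw [phi_eq]
  have := ((integrable_mul_exp_neg_mul_sq (b := 1/2) (by norm_num)).const_mul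
    ((Real.sqrt (2 * Real.pi))⁻¹)).neg
  exact this.congr (Eventually.of_forall fun y => by simp only [Pi.neg_apply]; ring)

lemma phi_hasDerivAt (y : ℝ) : HasDerivAt phi (-y * phi y) y := by
  have h1 : HasDerivAt (fun y : ℝ => -y ^ 2 / 2) (-y) y := by
    have := ((hasDerivAt_pow 2 y).neg).div_const 2
    exact this.congr_deriv (by push_cast; ring)
  have h2 := (h1.exp).const_mul ((Real.sqrt (2 * Real.pi))⁻¹)
  have : phi = fun y : ℝ => (Real.sqrt (2 * Real.pi))⁻¹ * Real.exp (-y ^ 2 / 2) := rfl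
  rw [this]
  exact h2.congr_deriv (by beta_reduce; ring)

lemma tendsto_phi_atBot : Tendsto phi atBot (𝓝 0) := by
  have h1 : Tendsto (fun y : ℝ => -y ^ 2 / 2) atBot atBot := by
    apply Tendsto.atBot_div_const (by norm_num)
    apply tendsto_neg_atBot_iff.2
    have : Tendsto (fun y : ℝ => (-y) ^ 2) atBot atTop :=
      (tendsto_pow_atTop two_ne_zero).comp tendsto_neg_atBot_atTop
    exact this.congr fun y => by ring
  have := (Real.tendsto_exp_atBot.comp h1).const_mul ((Real.sqrt (2 * Real.pi))⁻¹)
  have heq : phi = fun y : ℝ => (Real.sqrt (2 * Real.pi))⁻¹ * Real.exp (-y ^ 2 / 2) := rfl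
  rw [heq]
  simpa [Function.comp] using this

lemma integral_neg_mul_phi (x : ℝ) : ∫ y in Iic x, -y * phi y = phi x := by
  have := integral_Iic_of_hasDerivAt_of_tendsto' (f := phi) (f' := fun y => -y * phi y)
    (a := x) (m := 0) (fun y _ => phi_hasDerivAt y) integrable_mul_phi.integrableOn
    tendsto_phi_atBot
  simpa using this

lemma tendsto_inv_atBot_zero' : Tendsto (fun y : ℝ => y⁻¹) atBot (𝓝 0) := by
  have := (tendsto_inv_atTop_zero.comp (tendsto_neg_atBot_atTop (G := ℝ))).neg
  simp only [Function.comp_def, neg_zero] at this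
  exact this.congr fun y => by rw [inv_neg, neg_neg]

lemma Phi_pos (x : ℝ) : 0 < Phi x := by
  rw [Phi, setIntegral_pos_iff_support_of_nonneg_ae
    (Eventually.of_forall fun y => (phi_pos y).le) integrable_phi.integrableOn]
  have hsupp : Function.support phi = Set.univ := by
    ext y; simp [Function.mem_support, (phi_pos y).ne']
  rw [hsupp, Set.univ_inter, Real.volume_Iic]
  simp

lemma mills_upper {x : ℝ} (hx : x < 0) : Phi x ≤ phi x / (-x) := by
  have hineq : ∀ y ∈ Iic x, phi y ≤ (-y * phi y) / (-x) := by
    intro y hy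
    rw [le_div_iff₀ (by linarith)]
    have h1 : -x ≤ -y := by simp at hy ⊢; linarith [hy]
    nlinarith [phi_pos y, (phi_pos y).le]
  calc Phi x ≤ ∫ y in Iic x, (-y * phi y) / (-x) := by
        refine setIntegral_mono_on integrable_phi.integrableOn
          (integrable_mul_phi.div_const _).integrableOn measurableSet_Iic hineq
    _ = (∫ y in Iic x, -y * phi y) / (-x) := by rw [integral_div]
    _ = phi x / (-x) := by rw [integral_neg_mul_phi]

lemma integrableOn_phi_one_add {x : ℝ} (hx : x < 0) :
    IntegrableOn (fun y => phi y * (1 + 1 / y ^ 2)) (Iic x) := by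
  apply Integrable.mono' ((integrable_phi.const_mul (1 + 1 / x ^ 2)).integrableOn)
  · apply AEStronglyMeasurable.mul
    · exact continuous_phi.aestronglyMeasurable.restrict
    · exact (Measurable.aestronglyMeasurable (by measurability)).restrict
  · rw [ae_restrict_iff' measurableSet_Iic]
    refine Eventually.of_forall fun y hy => ?_
    simp only [mem_Iic] at hy
    have hy0 : y < 0 := lt_of_le_of_lt hy hx
    have h2 : 1 / y ^ 2 ≤ 1 / x ^ 2 := by
      apply one_div_le_one_div_of_le (by nlinarith)
      nlinarith
    have hnn : (0:ℝ) ≤ 1 + 1 / y ^ 2 := by positivity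
    rw [Real.norm_eq_abs, abs_of_nonneg (mul_nonneg (phi_pos y).le hnn)]
    calc phi y * (1 + 1 / y ^ 2) ≤ phi y * (1 + 1 / x ^ 2) := by
          apply mul_le_mul_of_nonneg_left (by linarith) (phi_pos y).le
      _ = (1 + 1 / x ^ 2) * phi y := by ring

set_option maxHeartbeats 1000000 in
lemma integral_phi_one_add (x : ℝ) (hx : x < 0) :
    ∫ y in Iic x, phi y * (1 + 1 / y ^ 2) = phi x / (-x) := by
  have hderiv : ∀ y ∈ Iic x, HasDerivAt (fun y => -(phi y / y)) (phi y * (1 + 1 / y ^ 2)) y := by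
    intro y hy
    have hy0 : y ≠ 0 := by simp at hy; intro h; rw [h] at hy; linarith
    have := ((phi_hasDerivAt y).div (hasDerivAt_id y) hy0).neg
    refine this.congr_deriv ?_
    simp only [id]
    field_simp
    ring
  have hint : IntegrableOn (fun y => phi y * (1 + 1 / y ^ 2)) (Iic x) :=
    integrableOn_phi_one_add hx
  have htends : Tendsto (fun y => -(phi y / y)) atBot (𝓝 0) := by
    have := (tendsto_phi_atBot.mul tendsto_inv_atBot_zero').neg
    simpa [div_eq_mul_inv] using this
  have := integral_Iic_of_hasDerivAt_of_tendsto' hderiv hint htends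
  rw [this]
  ring

lemma mills_lower {x : ℝ} (hx : x < 0) : phi x / (-x) ≤ Phi x * (1 + 1 / x ^ 2) := by
  rw [← integral_phi_one_add x hx]
  have hineq : ∀ y ∈ Iic x, phi y * (1 + 1 / y ^ 2) ≤ phi y * (1 + 1 / x ^ 2) := by
    intro y hy
    simp only [mem_Iic] at hy
    have h2 : 1 / y ^ 2 ≤ 1 / x ^ 2 := by
      apply one_div_le_one_div_of_le (by nlinarith)
      nlinarith
    exact mul_le_mul_of_nonneg_left (by linarith) (phi_pos y).le
  have hint : IntegrableOn (fun y => phi y * (1 + 1 / y ^ 2)) (Iic x) :=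
    integrableOn_phi_one_add hx
  calc (∫ y in Iic x, phi y * (1 + 1 / y ^ 2))
      ≤ ∫ y in Iic x, phi y * (1 + 1 / x ^ 2) := by
        refine setIntegral_mono_on hint
          ((integrable_phi.mul_const _).integrableOn) measurableSet_Iic hineq
    _ = Phi x * (1 + 1 / x ^ 2) := by rw [integral_mul_const]; rfl

lemma Phi_sub_Phi (a b : ℝ) : Phi b - Phi a = ∫ y in a..b, phi y :=
  intervalIntegral.integral_Iic_sub_Iic integrable_phi.integrableOn integrable_phi.integrableOn

lemma Phi_strictMono : StrictMono Phi := by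
  intro a b hab
  have h : 0 < ∫ y in a..b, phi y := by
    rw [intervalIntegral.integral_pos_iff_support_of_nonneg_ae
      (Eventually.of_forall fun y => (phi_pos y).le)
      (integrable_phi.intervalIntegrable)]
    refine ⟨hab, ?_⟩
    have hsupp : Function.support phi = Set.univ := by
      ext y; simp [Function.mem_support, (phi_pos y).ne']
    rw [hsupp, Set.univ_inter, Real.volume_Ioc]
    simp [hab]
  have := Phi_sub_Phi a b
  linarith

lemma continuous_Phi : Continuous Phi := by
  have : ∀ x, Phi x = Phi 0 + ∫ y in (0:ℝ)..x, phi y := by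
    intro x
    have := Phi_sub_Phi 0 x
    linarith
  rw [funext this]
  exact continuous_const.add (intervalIntegral.continuous_primitive
    (fun a b => integrable_phi.intervalIntegrable) 0)

lemma tendsto_Phi_atBot : Tendsto Phi atBot (𝓝 0) := by
  have hub : ∀ᶠ x in atBot, Phi x ≤ phi x / (-x) := by
    filter_upwards [eventually_lt_atBot (0:ℝ)] with x hx using mills_upper hx
  have hlb : ∀ᶠ x in atBot, 0 ≤ Phi x := Eventually.of_forall fun x => (Phi_pos x).le
  have hto : Tendsto (fun x => phi x / (-x)) atBot (𝓝 0) := by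
    have := tendsto_phi_atBot.mul tendsto_inv_atBot_zero'.neg
    simp only [neg_zero, mul_zero] at this
    exact this.congr fun y => by rw [div_eq_mul_inv, inv_neg, mul_neg]
  exact tendsto_of_tendsto_of_tendsto_of_le_of_le' tendsto_const_nhds hto hlb hub

lemma Phi_surj_small {α : ℝ} (h0 : 0 < α) (h1 : α ≤ Phi 0) : ∃ x ≤ 0, Phi x = α := by
  obtain ⟨b, hb⟩ : ∃ b, Phi b < α := by
    rcases (tendsto_Phi_atBot.eventually (eventually_lt_nhds h0)).exists with ⟨b, hb⟩
    exact ⟨b, hb⟩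
  have hb0 : b ≤ 0 := by
    by_contra hbb
    push_neg at hbb
    exact absurd (Phi_strictMono.monotone hbb.le) (by linarith)
  have := intermediate_value_Icc hb0 continuous_Phi.continuousOn
  have hmem : α ∈ Icc (Phi b) (Phi 0) := ⟨hb.le, h1⟩
  obtain ⟨x, hx, hPx⟩ := this hmem
  exact ⟨x, hx.2, hPx⟩

lemma Phi_PhiInv {α : ℝ} (h0 : 0 < α) (h1 : α ≤ Phi 0) : Phi (PhiInv α) = α := by
  obtain ⟨x, _, hx⟩ := Phi_surj_small h0 h1
  exact Function.invFun_eq ⟨x, hx⟩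

lemma tendsto_PhiInv : Tendsto PhiInv (𝓝[>] (0:ℝ)) atBot := by
  rw [tendsto_atBot]
  intro b
  set b' : ℝ := min b 0 with hb'
  have hb'0 : b' ≤ 0 := min_le_right _ _
  have hPb' : 0 < Phi b' := Phi_pos b'
  have hPb'le : Phi b' ≤ Phi 0 := Phi_strictMono.monotone hb'0
  filter_upwards [Ioo_mem_nhdsGT_of_mem (Set.left_mem_Ico.2 hPb')] with α hα
  obtain ⟨hα0, hα1⟩ := hα
  have heq : Phi (PhiInv α) = α := Phi_PhiInv hα0 (le_trans hα1.le hPb'le)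
  have : PhiInv α < b' := by
    by_contra hc
    push_neg at hc
    have := Phi_strictMono.monotone hc
    rw [heq] at this
    linarith
  exact le_trans this.le (min_le_left _ _)

lemma log_phi (x : ℝ) :
    Real.log (phi x) = -x ^ 2 / 2 - Real.log (Real.sqrt (2 * Real.pi)) := by
  have hs : Real.sqrt (2 * Real.pi) ≠ 0 := (Real.sqrt_pos.2 (by positivity)).ne'
  rw [phi, Real.log_mul (inv_ne_zero hs) (Real.exp_ne_zero _), Real.log_inv, Real.log_exp]
  ring

lemma tendsto_R :
    Tendsto (fun x => Real.log (Phi x) + x ^ 2 / 2 + Real.log (Real.sqrt (2 * Real.pi))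
      + Real.log (-x)) atBot (𝓝 0) := by
  have hlow : ∀ᶠ x in atBot, -Real.log (1 + 1 / x ^ 2) ≤
      Real.log (Phi x) + x ^ 2 / 2 + Real.log (Real.sqrt (2 * Real.pi)) + Real.log (-x) := by
    filter_upwards [eventually_lt_atBot (0:ℝ)] with x hx
    have hx0 : (0:ℝ) < -x := by linarith
    have h1 : (0:ℝ) < 1 + 1 / x ^ 2 := by positivity
    have hphi : 0 < phi x / (-x) := div_pos (phi_pos x) hx0
    have hml := mills_lower hx
    have h2 : phi x / (-x) / (1 + 1 / x ^ 2) ≤ Phi x := by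
      rw [div_le_iff₀ h1]; linarith
    have h3 := Real.log_le_log (div_pos hphi h1) h2
    rw [Real.log_div hphi.ne' h1.ne', Real.log_div (phi_pos x).ne' hx0.ne', log_phi] at h3
    linarith
  have hup : ∀ᶠ x in atBot, Real.log (Phi x) + x ^ 2 / 2 + Real.log (Real.sqrt (2 * Real.pi))
      + Real.log (-x) ≤ 0 := by
    filter_upwards [eventually_lt_atBot (0:ℝ)] with x hx
    have hx0 : (0:ℝ) < -x := by linarith
    have h3 := Real.log_le_log (Phi_pos x) (mills_upper hx)
    rw [Real.log_div (phi_pos x).ne' hx0.ne', log_phi] at h3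
    linarith
  have hg : Tendsto (fun x : ℝ => -Real.log (1 + 1 / x ^ 2)) atBot (𝓝 0) := by
    have hinv : Tendsto (fun x : ℝ => 1 + 1 / x ^ 2) atBot (𝓝 1) := by
      have h2 : Tendsto (fun x : ℝ => 1 / x ^ 2) atBot (𝓝 0) := by
        have := tendsto_inv_atBot_zero'.mul tendsto_inv_atBot_zero'
        simp only [mul_zero] at this
        exact this.congr fun x => by rw [one_div, ← mul_inv]; ring_nf
      simpa using tendsto_const_nhds.add h2
    have := ((Real.continuousAt_log (by norm_num)).tendsto.comp hinv).neg
    simpa using this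
  exact tendsto_of_tendsto_of_tendsto_of_le_of_le' hg tendsto_const_nhds hlow hup

noncomputable def LL (x : ℝ) : ℝ := -Real.log (Phi x)
noncomputable def MM (x : ℝ) : ℝ := Real.log (LL x)
noncomputable def RR (x : ℝ) : ℝ := Real.log (Phi x) + x ^ 2 / 2
  + Real.log (Real.sqrt (2 * Real.pi)) + Real.log (-x)
noncomputable def dd (x : ℝ) : ℝ := (1 / 2 - Phi x) * Real.log (1 - Phi x) - Phi x * LL x

lemma LL_eq (x : ℝ) : LL x = x ^ 2 / 2 + Real.log (Real.sqrt (2 * Real.pi))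
    + Real.log (-x) - RR x := by
  unfold LL RR; ring

lemma tendsto_RR : Tendsto RR atBot (𝓝 0) := tendsto_R

lemma tendsto_Phi_nhdsWithin : Tendsto Phi atBot (𝓝[>] (0:ℝ)) :=
  tendsto_nhdsWithin_iff.2 ⟨tendsto_Phi_atBot, Eventually.of_forall fun x => Phi_pos x⟩

lemma tendsto_LL : Tendsto LL atBot atTop :=
  tendsto_neg_atBot_atTop.comp (Real.tendsto_log_nhdsGT_zero.comp tendsto_Phi_nhdsWithin)

lemma tendsto_MM : Tendsto MM atBot atTop := Real.tendsto_log_atTop.comp tendsto_LL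

lemma tendsto_MM_inv : Tendsto (fun x => (MM x)⁻¹) atBot (𝓝 0) :=
  tendsto_inv_atTop_zero.comp tendsto_MM

lemma tendsto_sq_inv : Tendsto (fun x : ℝ => (x ^ 2)⁻¹) atBot (𝓝 0) := by
  have := tendsto_inv_atBot_zero'.mul tendsto_inv_atBot_zero'
  simp only [mul_zero] at this
  exact this.congr fun x => by rw [← mul_inv, ← pow_two]

lemma tendsto_log_div_sq_atTop : Tendsto (fun t : ℝ => Real.log t / t ^ 2) atTop (𝓝 0) := by
  have h1 : Tendsto (fun t : ℝ => Real.log t / t) atTop (𝓝 0) := by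
    have := Real.isLittleO_log_id_atTop.tendsto_div_nhds_zero
    exact this
  have := h1.mul tendsto_inv_atTop_zero
  simp only [mul_zero] at this
  exact this.congr fun t => by rw [← div_eq_mul_inv, div_div, ← pow_two]

lemma tendsto_log_div_sq : Tendsto (fun x : ℝ => Real.log x / x ^ 2) atBot (𝓝 0) := by
  have := tendsto_log_div_sq_atTop.comp (tendsto_neg_atBot_atTop (G := ℝ))
  exact this.congr fun x => by simp only [Function.comp_apply, neg_sq, Real.log_neg_eq_log]

lemma tendsto_two_LL_div_sq : Tendsto (fun x => 2 * LL x / x ^ 2) atBot (𝓝 1) := by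
  have hrest : Tendsto (fun x => (2 * Real.log (Real.sqrt (2 * Real.pi))
      + 2 * Real.log (-x) - 2 * RR x) / x ^ 2) atBot (𝓝 0) := by
    have h1 : Tendsto (fun x : ℝ => 2 * Real.log (Real.sqrt (2 * Real.pi)) * (x ^ 2)⁻¹)
        atBot (𝓝 0) := by simpa using tendsto_sq_inv.const_mul (2 * Real.log (Real.sqrt (2 * Real.pi)))
    have h2 : Tendsto (fun x : ℝ => 2 * (Real.log (-x) / x ^ 2)) atBot (𝓝 0) := by
      have hneg : Tendsto (fun x : ℝ => Real.log (-x) / x ^ 2) atBot (𝓝 0) := by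
        have := tendsto_log_div_sq.congr fun x : ℝ => by rw [← Real.log_neg_eq_log]
        exact this
      simpa using hneg.const_mul 2
    have h3 : Tendsto (fun x => 2 * RR x * (x ^ 2)⁻¹) atBot (𝓝 0) := by
      have := (tendsto_RR.const_mul 2).mul tendsto_sq_inv
      simpa using this
    have := (h1.add h2).sub h3
    simp only [add_zero, sub_zero, zero_add, zero_sub, neg_zero] at this
    exact this.congr fun x => by rw [div_eq_mul_inv]; ring
  have key : Tendsto (fun x => 1 + (2 * Real.log (Real.sqrt (2 * Real.pi))
      + 2 * Real.log (-x) - 2 * RR x) / x ^ 2) atBot (𝓝 1) := by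
    simpa using tendsto_const_nhds.add hrest
  apply key.congr'
  filter_upwards [eventually_lt_atBot (0:ℝ)] with x hx
  have hx2 : x ^ 2 ≠ 0 := by nlinarith
  have hx0 : x ≠ 0 := hx.ne
  rw [LL_eq]
  field_simp
  ring

lemma tendsto_sq_div_LL : Tendsto (fun x => x ^ 2 / LL x) atBot (𝓝 2) := by
  have h := (tendsto_const_nhds (x := (2:ℝ))).div tendsto_two_LL_div_sq one_ne_zero
  rw [div_one] at h
  apply h.congr'
  filter_upwards [eventually_lt_atBot (0:ℝ), tendsto_LL.eventually_gt_atTop 0] with x hx hL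
  have hx2 : x ^ 2 ≠ 0 := by nlinarith
  have hx0 : x ≠ 0 := hx.ne
  simp only [Pi.div_apply]
  field_simp

lemma tendsto_logsq_sub_MM : Tendsto (fun x => Real.log (x ^ 2) - MM x) atBot (𝓝 (Real.log 2)) := by
  have h := (Real.continuousAt_log (by norm_num : (2:ℝ) ≠ 0)).tendsto.comp tendsto_sq_div_LL
  apply h.congr'
  filter_upwards [eventually_lt_atBot (0:ℝ), tendsto_LL.eventually_gt_atTop 0] with x hx hL
  have hx2 : x ^ 2 ≠ 0 := by nlinarith
  simp only [Function.comp_apply]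
  rw [Real.log_div hx2 hL.ne', MM]

lemma tendsto_logsq_div_MM : Tendsto (fun x => Real.log (x ^ 2) / MM x) atBot (𝓝 1) := by
  have h1 : Tendsto (fun x => (Real.log (x ^ 2) - MM x) * (MM x)⁻¹) atBot (𝓝 0) := by
    have := tendsto_logsq_sub_MM.mul tendsto_MM_inv
    simpa using this
  have h2 : Tendsto (fun x => 1 + (Real.log (x ^ 2) - MM x) * (MM x)⁻¹) atBot (𝓝 1) := by
    simpa using tendsto_const_nhds.add h1
  apply h2.congr'
  filter_upwards [tendsto_MM.eventually_gt_atTop 0] with x hM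
  field_simp
  ring

lemma tendsto_dd : Tendsto dd atBot (𝓝 0) := by
  have hAL : Tendsto (fun x => Phi x * LL x) atBot (𝓝 0) := by
    have := (tendsto_log_mul_rpow_nhdsGT_zero one_pos).comp tendsto_Phi_nhdsWithin
    have h2 := this.neg
    simp only [Function.comp_apply, Real.rpow_one, neg_zero] at h2
    exact h2.congr fun x => by rw [LL]; ring
  have hlog1m : Tendsto (fun x => Real.log (1 - Phi x)) atBot (𝓝 0) := by
    have hb : Tendsto (fun x => 1 - Phi x) atBot (𝓝 1) := by
      simpa using tendsto_const_nhds.sub tendsto_Phi_atBot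
    have := (Real.continuousAt_log (by norm_num : (1:ℝ) ≠ 0)).tendsto.comp hb
    simpa [Function.comp_def] using this
  have hc : Tendsto (fun x => 1 / 2 - Phi x) atBot (𝓝 (1/2)) := by
    simpa using tendsto_const_nhds.sub tendsto_Phi_atBot
  have := (hc.mul hlog1m).sub hAL
  simp only [mul_zero, sub_zero, zero_mul] at this
  apply this.congr
  intro x
  rw [dd]

lemma tendsto_bracket :
    Tendsto (fun x => (x ^ 2 - 2 * LL x - 4 * dd x) / MM x) atBot (𝓝 (-1)) := by
  have h1 : Tendsto (fun x => (-(2 * Real.log (Real.sqrt (2 * Real.pi))) + 2 * RR x) * (MM x)⁻¹)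
      atBot (𝓝 0) := by
    have hnum : Tendsto (fun x => -(2 * Real.log (Real.sqrt (2 * Real.pi))) + 2 * RR x) atBot
        (𝓝 (-(2 * Real.log (Real.sqrt (2 * Real.pi))))) := by
      simpa using tendsto_const_nhds.add (tendsto_RR.const_mul 2)
    simpa using hnum.mul tendsto_MM_inv
  have h3 : Tendsto (fun x => 4 * dd x * (MM x)⁻¹) atBot (𝓝 0) := by
    simpa using (tendsto_dd.const_mul 4).mul tendsto_MM_inv
  have := (h1.sub tendsto_logsq_div_MM).sub h3
  simp only [zero_sub, sub_zero] at this
  apply this.congr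
  intro x
  have hnum : x ^ 2 - 2 * LL x - 4 * dd x
      = (-(2 * Real.log (Real.sqrt (2 * Real.pi))) + 2 * RR x) - Real.log (x ^ 2) - 4 * dd x := by
    have hlog : Real.log (x ^ 2) = 2 * Real.log (-x) := by
      rw [Real.log_pow, Real.log_neg_eq_log]
      push_cast; ring
    rw [hlog, LL_eq]; ring
  rw [div_eq_mul_inv, hnum, div_eq_mul_inv]
  ring

lemma tendsto_G : Tendsto (fun x : ℝ =>
    (((1 - 2 * Phi x) / 2 * Real.log ((1 - Phi x) / Phi x)) / x ^ 2
      - (1 / 4 - Real.log (-Real.log (Phi x)) / (8 * Real.log (Phi x))))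
      / (Real.log (-Real.log (Phi x)) / Real.log (Phi x))) atBot (𝓝 0) := by
  have hlim : Tendsto (fun x => ((x ^ 2 - 2 * LL x - 4 * dd x) / MM x) * (2 * LL x / x ^ 2) / 8
      + 1 / 8) atBot (𝓝 ((-1) * 1 / 8 + 1 / 8)) :=
    ((tendsto_bracket.mul tendsto_two_LL_div_sq).div_const 8).add tendsto_const_nhds
  norm_num at hlim
  apply hlim.congr'
  filter_upwards [eventually_lt_atBot (0:ℝ),
    tendsto_Phi_atBot.eventually_lt_const (show (0:ℝ) < 1/2 by norm_num),
    tendsto_LL.eventually_gt_atTop 1] with x hx hA hL1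
  have hA0 : 0 < Phi x := Phi_pos x
  have h1mA : 0 < 1 - Phi x := by linarith
  have hL0 : (0:ℝ) < LL x := by linarith
  have hM0 : 0 < MM x := Real.log_pos hL1
  have hx2 : x ^ 2 ≠ 0 := by nlinarith
  have hlogA : Real.log (Phi x) = -LL x := by rw [LL]; ring
  have hMM : Real.log (-Real.log (Phi x)) = MM x := by rw [MM, LL]
  have hlogdiv : Real.log ((1 - Phi x) / Phi x) = Real.log (1 - Phi x) + LL x := by
    rw [Real.log_div h1mA.ne' hA0.ne', hlogA]; ring
  have hx0 : x ≠ 0 := hx.ne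
  rw [hlogdiv, hMM, hlogA, dd]
  field_simp
  ring

theorem f_rate :
    Filter.Tendsto
      (fun α : ℝ =>
        (((1 - 2 * α) / 2 * Real.log ((1 - α) / α)) / (PhiInv α) ^ 2
            - (1 / 4 - Real.log (-Real.log α) / (8 * Real.log α)))
          / (Real.log (-Real.log α) / Real.log α))
      (𝓝[>] 0) (𝓝 0) := by
  have h := tendsto_G.comp tendsto_PhiInv
  apply h.congr'
  filter_upwards [Ioo_mem_nhdsGT_of_mem (Set.left_mem_Ico.2 (Phi_pos 0))] with α hα
  have hP : Phi (PhiInv α) = α := Phi_PhiInv hα.1 hα.2.le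
  simp only [Function.comp_apply]
  rw [hP]
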